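/- For all integers n with 1 ≤ n ≤ p, the congruence n·g_{(p-1)/2, l}(n) ≡ g̃_l(n) (mod p) holds in the localization Z_(p). In particular, g_{(p-1)/2, l}(p) ∈ Z_(p) if and only if g̃_l(p) = 0 or g̃_l(p) = p. -/

import Mathlib

/-- The (k,l)-Göbel sequence with values in ℚ: g 1 = l and
    (n+1) * g (n+1) = g n * (n + g n ^ (k-1)). -/
def gobel (k : ℕ) (l : ℚ) : ℕ → ℚ
  | 0 => 0
  | 1 => l
  | (n+2) => gobel k l (n+1) * (((n:ℚ)+1) + (gobel k l (n+1)) ^ (k-1)) / ((n:ℚ)+2)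

/-- The auxiliary sequence g̃_l of Kobayashi–Seki. -/
def gtilde (p : ℕ) [Fact p.Prime] (l : ℕ) : ℕ → ℤ
  | 0 => (l : ℤ)
  | 1 => (l : ℤ)
  | (n+2) =>
    let g := gtilde p l (n+1)
    if 0 < g ∧ g < (p : ℤ) then g + legendreSym p ((n:ℤ)+1) * legendreSym p g else g

/-- A rational number belongs to the localization ℤ_(p). -/
def inZp (p : ℕ) (x : ℚ) : Prop := ¬ (p ∣ x.den)

/-- Congruence modulo p inside ℤ_(p). -/
def modCongZp (p : ℕ) (x y : ℚ) : Prop :=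
  ∃ z : ℚ, ¬ (p ∣ z.den) ∧ x - y = (p : ℚ) * z

/-- Auxiliary: explicit p-integral congruence. -/
def CongAux (p : ℕ) (x : ℚ) (m : ℤ) : Prop :=
  ∃ a b : ℤ, ((b : ZMod p) ≠ 0) ∧ x = (a:ℚ)/(b:ℚ) ∧ ((a : ZMod p) = (m : ZMod p) * (b : ZMod p))

lemma den_div_not_dvd (p : ℕ) (c b : ℤ) (hb : ¬ (p:ℤ) ∣ b) :
    ¬ (p ∣ ((c:ℚ)/(b:ℚ)).den) := by
  intro h
  apply hb
  have h1 : ((c:ℚ)/(b:ℚ)) = Rat.divInt c b := (Rat.divInt_eq_div c b).symm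
  have h2 : ((Rat.divInt c b).den : ℤ) ∣ b := Rat.den_dvd c b
  rw [h1] at h
  exact dvd_trans (Int.natCast_dvd_natCast.mpr h) h2

lemma congAux_to_mod (p : ℕ) [Fact p.Prime] (x : ℚ) (m : ℤ) (h : CongAux p x m) :
    modCongZp p x m := by
  obtain ⟨a, b, hb, hx, hres⟩ := h
  have hbd : ¬ (p:ℤ) ∣ b := fun hd => hb ((ZMod.intCast_zmod_eq_zero_iff_dvd b p).mpr hd)
  have hbQ : (b:ℚ) ≠ 0 := by
    intro h0
    apply hb
    have : b = 0 := by exact_mod_cast h0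
    simp [this]
  have hdvd : (p:ℤ) ∣ (a - m * b) := by
    rw [← ZMod.intCast_zmod_eq_zero_iff_dvd]
    push_cast
    rw [hres]; ring
  obtain ⟨c, hc⟩ := hdvd
  refine ⟨(c:ℚ)/(b:ℚ), den_div_not_dvd p c b hbd, ?_⟩
  rw [hx]
  have : (a:ℚ) - m * b = (p:ℚ) * c := by exact_mod_cast hc
  field_simp
  linarith [this]

lemma gobel_rec (k : ℕ) (l : ℚ) (n : ℕ) (hn : 1 ≤ n) (hk : 1 ≤ k) :
    ((n:ℚ)+1) * gobel k l (n+1) = (n:ℚ) * gobel k l n + (gobel k l n)^k := by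
  obtain ⟨m, rfl⟩ : ∃ m, n = m + 1 := ⟨n - 1, by omega⟩
  obtain ⟨j, rfl⟩ : ∃ j, k = j + 1 := ⟨k - 1, by omega⟩
  have h : gobel (j+1) l (m+2) =
      gobel (j+1) l (m+1) * (((m:ℚ)+1) + (gobel (j+1) l (m+1)) ^ j) / ((m:ℚ)+2) := rfl
  have hne : ((m:ℚ)+2) ≠ 0 := by positivity
  push_cast
  rw [show ((m:ℚ)+1+1) = ((m:ℚ)+2) by ring, h]
  field_simp
  ring

theorem stmt0 (p : ℕ) [Fact p.Prime] (hp2 : p ≠ 2) (l : ℕ) (hl : l ≤ p - 1) :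
    (∀ n : ℕ, 1 ≤ n → n ≤ p →
      modCongZp p ((n : ℚ) * gobel ((p - 1) / 2) (l : ℚ) n) ((gtilde p l n : ℤ) : ℚ)) ∧
    (inZp p (gobel ((p - 1) / 2) (l : ℚ) p) ↔
      gtilde p l p = 0 ∨ gtilde p l p = (p : ℤ)) := by
  have hp : p.Prime := Fact.out
  have hodd : p % 2 = 1 := Nat.odd_iff.mp (hp.odd_of_ne_two hp2)
  have hp3 : 3 ≤ p := by
    have := hp.two_le
    omega
  set k := (p - 1) / 2 with hkdef
  have hk2 : k = p / 2 := by omega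
  have hk1 : 1 ≤ k := by omega
  -- main induction
  have key : ∀ n : ℕ, 1 ≤ n → n ≤ p →
      (0 ≤ gtilde p l n ∧ gtilde p l n ≤ p) ∧
      CongAux p ((n:ℚ) * gobel k (l:ℚ) n) (gtilde p l n) := by
    intro n
    induction n with
    | zero => intro h; omega
    | succ n ih =>
      intro _ hnp
      rcases Nat.eq_or_lt_of_le (show 1 ≤ n + 1 by omega) with h1 | h1
      · -- base case n+1 = 1
        have hn0 : n = 0 := by omega
        subst hn0
        constructor
        · constructor
          · simp [gtilde]
          · simp only [gtilde]
            exact_mod_cast Nat.le_of_lt_succ (by omega : l < p + 1)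
        · refine ⟨(l:ℤ), 1, ?_, ?_, ?_⟩
          · simp
          · simp [gtilde, gobel]
          · simp [gtilde]
      · -- inductive step: n ≥ 1
        have hn1 : 1 ≤ n := by omega
        have hnlt : n < p := by omega
        obtain ⟨⟨hge, hle⟩, a, b, hb, hx, hres⟩ := ih hn1 (le_of_lt hnp)
        obtain ⟨m, rfl⟩ : ∃ m, n = m + 1 := ⟨n - 1, by omega⟩
        have hgt : gtilde p l (m+2) =
            if 0 < gtilde p l (m+1) ∧ gtilde p l (m+1) < (p:ℤ) then
              gtilde p l (m+1) + legendreSym p ((m:ℤ)+1) * legendreSym p (gtilde p l (m+1))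
            else gtilde p l (m+1) := rfl
        set g := gtilde p l (m+1) with hgdef
        have hNne : (((m:ℕ)+1 : ℕ) : ZMod p) ≠ 0 := by
          rw [Ne, ZMod.natCast_eq_zero_iff]
          intro hd
          have := Nat.le_of_dvd (by omega) hd
          omega
        have hbQ : (b:ℚ) ≠ 0 := by
          intro h0
          apply hb
          have : b = 0 := by exact_mod_cast h0
          simp [this]
        have hnQ : ((m:ℚ)+1) ≠ 0 := by positivity
        -- recurrence in ℚ
        have hrec := gobel_rec k (l:ℚ) (m+1) (by omega) hk1
        have hgn : gobel k (l:ℚ) (m+1) = (a:ℚ) / (((m:ℚ)+1) * b) := by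
          have : ((m:ℚ)+1) * gobel k (l:ℚ) (m+1) = (a:ℚ)/(b:ℚ) := by
            push_cast at hx ⊢; exact hx
          field_simp at this ⊢
          linarith [this]
        -- new witnesses
        refine ⟨?_, a * (((m:ℤ)+1) * b)^k + a^k * b, b * (((m:ℤ)+1) * b)^k, ?_, ?_, ?_⟩
        · -- bounds
          rw [hgt]
          by_cases h01 : 0 < g ∧ g < (p:ℤ)
          · rw [if_pos h01]
            have hgz : ((g:ℤ) : ZMod p) ≠ 0 := by
              rw [Ne, ZMod.intCast_zmod_eq_zero_iff_dvd]
              intro hd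
              have := Int.le_of_dvd h01.1 hd
              omega
            have hnz : (((m:ℤ)+1 : ℤ) : ZMod p) ≠ 0 := by
              push_cast at hNne ⊢
              exact_mod_cast hNne
            have h1 := legendreSym.sq_one (p := p) hnz
            have h2 := legendreSym.sq_one (p := p) hgz
            have e1 : legendreSym p ((m:ℤ)+1) = 1 ∨ legendreSym p ((m:ℤ)+1) = -1 := by
              rcases Int.isUnit_iff.mp (IsUnit.of_mul_eq_one _ (by rw [← sq]; exact h1)) with h | h
              · exact Or.inl h
              · exact Or.inr h
            have e2 : legendreSym p g = 1 ∨ legendreSym p g = -1 := by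
              rcases Int.isUnit_iff.mp (IsUnit.of_mul_eq_one _ (by rw [← sq]; exact h2)) with h | h
              · exact Or.inl h
              · exact Or.inr h
            rcases e1 with h1' | h1' <;> rcases e2 with h2' | h2' <;> rw [h1', h2'] <;> omega
          · rw [if_neg h01]
            exact ⟨hge, hle⟩
        · -- denominator nonzero in ZMod p
          push_cast
          exact mul_ne_zero (by exact_mod_cast hb) (pow_ne_zero _ (mul_ne_zero (by exact_mod_cast hNne) (by exact_mod_cast hb)))
        · -- value equation
          have hxval : (((m:ℕ)+1+1 : ℕ) : ℚ) * gobel k (l:ℚ) (m+1+1)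
              = (a:ℚ)/(b:ℚ) + ((a:ℚ) / (((m:ℚ)+1) * b))^k := by
            push_cast
            push_cast at hrec hx
            rw [hrec, hx, hgn]
          rw [hxval]
          push_cast
          field_simp
          have hD : ((b:ℚ) * ((m:ℚ)+1))^k ≠ 0 := pow_ne_zero _ (mul_ne_zero hbQ hnQ)
          rw [div_pow, add_mul, mul_assoc, div_mul_cancel₀ _ hD]
        · -- residue equation
          rw [hgt]
          have hA : ((a:ℤ) : ZMod p) = ((g:ℤ) : ZMod p) * ((b:ℤ) : ZMod p) := hres
          have hNk : ((((m:ℤ)+1 : ℤ)) : ZMod p)^k = ((legendreSym p ((m:ℤ)+1) : ℤ) : ZMod p) := by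
            rw [legendreSym.eq_pow, hk2]
          have hGk : (((g:ℤ)) : ZMod p)^k = ((legendreSym p g : ℤ) : ZMod p) := by
            rw [legendreSym.eq_pow, hk2]
          by_cases h01 : 0 < g ∧ g < (p:ℤ)
          · rw [if_pos h01]
            have hnz : (((m:ℤ)+1 : ℤ) : ZMod p) ≠ 0 := by
              push_cast at hNne ⊢
              exact_mod_cast hNne
            have hLn2 : ((legendreSym p ((m:ℤ)+1) : ℤ) : ZMod p)^2 = 1 := by
              have := legendreSym.sq_one (p := p) hnz
              exact_mod_cast congrArg (fun z : ℤ => (z : ZMod p)) this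
            push_cast
            push_cast at hA hNk hGk
            rw [mul_pow ((m:ZMod p)+1) (b:ZMod p), hNk, hA, mul_pow ((g:ZMod p)) (b:ZMod p), hGk]
            linear_combination (-(((legendreSym p g : ℤ) : ZMod p)) * ((b:ZMod p))^(k+1)) * hLn2
          · rw [if_neg h01]
            have hG0 : ((g:ℤ) : ZMod p) = 0 := by
              have : g = 0 ∨ g = (p:ℤ) := by omega
              rcases this with h | h
              · simp [h]
              · simp [h]
            have hA0 : ((a:ℤ) : ZMod p) = 0 := by rw [hA, hG0]; ring
            push_cast
            push_cast at hA0 hG0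
            rw [hA0, hG0]
            rw [zero_pow (by omega : k ≠ 0)]
            ring
  -- conclude
  obtain ⟨⟨hge, hle⟩, a, b, hb, hx, hres⟩ := key p (by omega) le_rfl
  have hbd : ¬ (p:ℤ) ∣ b := fun hd => hb ((ZMod.intCast_zmod_eq_zero_iff_dvd b p).mpr hd)
  have hbQ : (b:ℚ) ≠ 0 := by
    intro h0
    apply hb
    have : b = 0 := by exact_mod_cast h0
    simp [this]
  have hpQ : (p:ℚ) ≠ 0 := by positivity
  constructor
  · intro n hn1 hn2
    exact congAux_to_mod p _ _ ⟨a, b, hb, hx, hres⟩ |> fun _ => by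
      obtain ⟨_, h⟩ := key n hn1 hn2
      exact congAux_to_mod p _ _ h
  · constructor
    · -- inZp → gtilde p l p = 0 ∨ = p
      intro hin
      by_contra hcon
      push_neg at hcon
      have h01 : 0 < gtilde p l p ∧ gtilde p l p < (p:ℤ) := by
        constructor
        · rcases lt_or_eq_of_le hge with h | h
          · exact h
          · exact absurd h.symm hcon.1
        · rcases lt_or_eq_of_le hle with h | h
          · exact h
          · exact absurd h hcon.2
      have hGz : (((gtilde p l p : ℤ)) : ZMod p) ≠ 0 := by
        rw [Ne, ZMod.intCast_zmod_eq_zero_iff_dvd]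
        intro hd
        have := Int.le_of_dvd h01.1 hd
        omega
      have hAz : ((a:ℤ) : ZMod p) ≠ 0 := by
        rw [hres]
        exact mul_ne_zero hGz hb
      set q := gobel k (l:ℚ) p with hq
      have hqden : ((q.den : ℕ) : ZMod p) ≠ 0 := by
        rw [Ne, ZMod.natCast_eq_zero_iff]
        exact hin
      have hdenQ : (q.den : ℚ) ≠ 0 := by
        exact_mod_cast q.den_ne_zero
      have hcross : (p:ℤ) * q.num * b = a * q.den := by
        have h1 : (p:ℚ) * q = (a:ℚ)/(b:ℚ) := hx
        have h2 : q = (q.num : ℚ) / (q.den : ℚ) := (Rat.num_div_den q).symm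
        rw [h2] at h1
        field_simp at h1
        have h1' : (p:ℤ) * q.num * b = q.den * a := by exact_mod_cast h1
        rw [h1', mul_comm]
      have : ((0:ZMod p)) = ((a:ℤ):ZMod p) * ((q.den : ℕ) : ZMod p) := by
        have := congrArg (fun z : ℤ => (z : ZMod p)) hcross
        push_cast at this
        simpa using this.symm
      exact (mul_ne_zero hAz hqden) this.symm
    · -- gtilde = 0 ∨ = p → inZp
      intro hcase
      have hG0 : (((gtilde p l p : ℤ)) : ZMod p) = 0 := by
        rcases hcase with h | h
        · simp [h]
        · simp [h]
      have hA0 : ((a:ℤ) : ZMod p) = 0 := by rw [hres, hG0]; ring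
      have hpa : (p:ℤ) ∣ a := (ZMod.intCast_zmod_eq_zero_iff_dvd a p).mp hA0
      obtain ⟨c, hc⟩ := hpa
      have hval : gobel k (l:ℚ) p = (c:ℚ)/(b:ℚ) := by
        have h1 : (p:ℚ) * gobel k (l:ℚ) p = (a:ℚ)/(b:ℚ) := hx
        have h2 : (a:ℚ) = (p:ℚ) * c := by exact_mod_cast hc
        rw [h2] at h1
        field_simp at h1 ⊢
        exact mul_left_cancel₀ hpQ (by linear_combination (p:ℚ) * h1)
      rw [inZp, hval]
      exact den_div_not_dvd p c b hbd
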